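/- The affine Weyl group W̃_A is a normal subgroup of the extended affine Weyl group W̃_A^ext, and the quotient group W̃_A^ext / W̃_A is cyclic, generated by the image of t_δ; equivalently, W̃_A^ext = ⋃_{n ∈ ℤ} W̃_A · t_δⁿ. -/

import Mathlib

namespace AffineGRS

noncomputable section

/-- The vertex set `Ṽ_A` of the affine Coxeter--Dynkin diagram attached to a
triple `A = (a 0, a 1, a 2)`: it consists of `𝟙*`, `𝟙` and the branch vertices
`(i, j)` for `i ∈ {1,2,3}` and `1 ≤ j ≤ a i − 1` (coded by `Fin (a i - 1)`). -/
inductive Vt (a : Fin 3 → ℕ) : Type where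
  | star : Vt a
  | one  : Vt a
  | br   : (i : Fin 3) → Fin (a i - 1) → Vt a

def vtEquiv (a : Fin 3 → ℕ) : Vt a ≃ (Unit ⊕ Unit ⊕ (Σ i : Fin 3, Fin (a i - 1))) where
  toFun v :=
    match v with
    | Vt.star => Sum.inl ()
    | Vt.one => Sum.inr (Sum.inl ())
    | Vt.br i j => Sum.inr (Sum.inr ⟨i, j⟩)
  invFun x :=
    match x with
    | Sum.inl _ => Vt.star
    | Sum.inr (Sum.inl _) => Vt.one
    | Sum.inr (Sum.inr ⟨i, j⟩) => Vt.br i j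
  left_inv v := by cases v <;> rfl
  right_inv x := by rcases x with _ | (_ | ⟨i, j⟩) <;> rfl

instance (a : Fin 3 → ℕ) : DecidableEq (Vt a) := (vtEquiv a).decidableEq
instance (a : Fin 3 → ℕ) : Fintype (Vt a) := Fintype.ofEquiv _ (vtEquiv a).symm

/-- The entries `Ĩ(α_u, α_v)` of the Cartan form on the basis `{α_v : v ∈ Ṽ_A}`. -/
def cartan (a : Fin 3 → ℕ) : Vt a → Vt a → ℤ
  | Vt.star, Vt.star => 2
  | Vt.one, Vt.one => 2
  | Vt.star, Vt.one => 2
  | Vt.one, Vt.star => 2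
  | Vt.star, Vt.br _ j => if (j : ℕ) = 0 then -1 else 0
  | Vt.br _ j, Vt.star => if (j : ℕ) = 0 then -1 else 0
  | Vt.one, Vt.br _ j => if (j : ℕ) = 0 then -1 else 0
  | Vt.br _ j, Vt.one => if (j : ℕ) = 0 then -1 else 0
  | Vt.br i j, Vt.br i' j' =>
      if i = i' ∧ ((j : ℕ) = (j' : ℕ) + 1 ∨ (j' : ℕ) = (j : ℕ) + 1) then -1
      else if i = i' ∧ (j : ℕ) = (j' : ℕ) then 2 else 0

/-- The root lattice `L̃`: the free `ℤ`-module with basis `{α_v : v ∈ Ṽ_A}`. -/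
abbrev Lt (a : Fin 3 → ℕ) : Type := Vt a →₀ ℤ

/-- The basis vector `α_v ∈ L̃`. -/
def gen (a : Fin 3 → ℕ) (v : Vt a) : Lt a := Finsupp.single v 1

/-- The symmetric bilinear form `Ĩ` on `L̃`. -/
def Iform (a : Fin 3 → ℕ) (x y : Lt a) : ℤ :=
  x.sum fun u xu => y.sum fun v yv => xu * yv * cartan a u v

/-- `δ := α_{𝟙*} − α_𝟙`. -/
def delta (a : Fin 3 → ℕ) : Lt a := gen a Vt.star - gen a Vt.one

/-- The reflection `r_α(x) = x − Ĩ(α, x) α` (for `α` with `Ĩ(α,α) = 2`). -/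
def reflect (a : Fin 3 → ℕ) (α : Lt a) (x : Lt a) : Lt a := x - Iform a α x • α

/-- The composite `r_{α_{(i,1)}} ∘ r_{α_{(i,2)}} ∘ ⋯ ∘ r_{α_{(i, a i − 1)}}`. -/
def branchComp (a : Fin 3 → ℕ) (i : Fin 3) : Lt a → Lt a :=
  (List.finRange (a i - 1)).foldr (fun j f => reflect a (gen a (Vt.br i j)) ∘ f) id

/-- The Coxeter transformation
`c̃_A := r_{α_{𝟙*}} ∘ r_{α_𝟙} ∘ r_{α_{(1,1)}} ∘ ⋯ ∘ r_{α_{(3, a₃ − 1)}}`. -/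
def coxeter (a : Fin 3 → ℕ) : Lt a → Lt a :=
  reflect a (gen a Vt.star) ∘ reflect a (gen a Vt.one) ∘
    branchComp a 0 ∘ branchComp a 1 ∘ branchComp a 2

/-- A `ℤ`-bilinear form `χ` on `L̃` is an Euler form for `(L̃, Ĩ, c̃_A)` if
`Ĩ = χ + χᵀ` and `χ(λ, λ') = −χ(λ', c̃_A(λ))` (Serre duality). -/
def IsEulerForm (a : Fin 3 → ℕ) (χ : Lt a →ₗ[ℤ] Lt a →ₗ[ℤ] ℤ) : Prop :=
  (∀ x y : Lt a, Iform a x y = χ x y + χ y x) ∧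
  (∀ x y : Lt a, χ x y = - χ y (coxeter a x))

/-- The twist automorphism `t_δ(λ) = λ − χ(δ, λ) δ` (as a function). -/
def twist (a : Fin 3 → ℕ) (χ : Lt a →ₗ[ℤ] Lt a →ₗ[ℤ] ℤ) (x : Lt a) : Lt a :=
  x - χ (delta a) x • delta a

/-- The inverse of the twist automorphism, `λ ↦ λ + χ(δ, λ) δ`. -/
def twistInv (a : Fin 3 → ℕ) (χ : Lt a →ₗ[ℤ] Lt a →ₗ[ℤ] ℤ) (x : Lt a) : Lt a :=
  x + χ (delta a) x • delta a

/-- The simple reflections `r_{α_v}`, viewed as the set of `ℤ`-linear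
automorphisms of `L̃` whose underlying function is `reflect a (gen a v)`. -/
def weylGens (a : Fin 3 → ℕ) : Set (Lt a ≃ₗ[ℤ] Lt a) :=
  { g | ∃ v : Vt a, ∀ x : Lt a, g x = reflect a (gen a v) x }

/-- The affine Weyl group `W̃_A`, generated by the simple reflections. -/
def weyl (a : Fin 3 → ℕ) : Subgroup (Lt a ≃ₗ[ℤ] Lt a) := Subgroup.closure (weylGens a)

/-- The set of real roots `Δ̃_re = {w(α_v) : w ∈ W̃_A, v ∈ Ṽ_A}`. -/
def realRoots (a : Fin 3 → ℕ) : Set (Lt a) :=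
  { x | ∃ w ∈ weyl a, ∃ v : Vt a, x = w (gen a v) }

/-- The extended affine Weyl group `W̃_A^ext`, generated by `W̃_A` and `t_δ`. -/
def extWeyl (a : Fin 3 → ℕ) (χ : Lt a →ₗ[ℤ] Lt a →ₗ[ℤ] ℤ) :
    Subgroup (Lt a ≃ₗ[ℤ] Lt a) :=
  Subgroup.closure (weylGens a ∪ { g | ∀ x : Lt a, g x = twist a χ x })

section Aux
variable {a : Fin 3 → ℕ}

lemma cartan_symm (u v : Vt a) : cartan a u v = cartan a v u := by
  cases u <;> cases v <;> simp [cartan]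
  rename_i i j i' j'
  by_cases hi : i = i'
  · subst hi
    simp only [true_and]
    split_ifs <;> omega
  · simp only [hi, false_and, if_neg, if_false]
    rw [if_neg (by tauto), if_neg (by tauto)]

lemma cartan_diag (v : Vt a) : cartan a v v = 2 := by
  cases v <;> simp [cartan]

lemma cartan_row_star_one (u : Vt a) : cartan a u Vt.star = cartan a u Vt.one := by
  cases u <;> simp [cartan]

lemma cartan_col_star_one (u : Vt a) : cartan a Vt.star u = cartan a Vt.one u := by
  cases u <;> simp [cartan]

lemma Iform_apply (x y : Lt a) :
    Iform a x y = ∑ u : Vt a, ∑ v : Vt a, x u * y v * cartan a u v := by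
  unfold Iform
  rw [Finsupp.sum_fintype]
  · refine Finset.sum_congr rfl fun u _ => ?_
    rw [Finsupp.sum_fintype]
    intro v; ring
  · intro u; simp [Finsupp.sum]

end Aux
section Aux2
variable {a : Fin 3 → ℕ}

lemma Iform_add_left (x y z : Lt a) :
    Iform a (x + y) z = Iform a x z + Iform a y z := by
  simp only [Iform_apply, Finsupp.add_apply, ← Finset.sum_add_distrib]
  refine Finset.sum_congr rfl fun u _ => Finset.sum_congr rfl fun v _ => by ring

lemma Iform_add_right (x y z : Lt a) :
    Iform a x (y + z) = Iform a x y + Iform a x z := by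
  simp only [Iform_apply, Finsupp.add_apply, ← Finset.sum_add_distrib]
  refine Finset.sum_congr rfl fun u _ => Finset.sum_congr rfl fun v _ => by ring

lemma Iform_smul_left (c : ℤ) (x z : Lt a) :
    Iform a (c • x) z = c * Iform a x z := by
  simp only [Iform_apply, Finsupp.smul_apply, smul_eq_mul, Finset.mul_sum]
  refine Finset.sum_congr rfl fun u _ => Finset.sum_congr rfl fun v _ => by ring

lemma Iform_smul_right (c : ℤ) (x z : Lt a) :
    Iform a x (c • z) = c * Iform a x z := by
  simp only [Iform_apply, Finsupp.smul_apply, smul_eq_mul, Finset.mul_sum]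
  refine Finset.sum_congr rfl fun u _ => Finset.sum_congr rfl fun v _ => by ring

lemma Iform_sub_left (x y z : Lt a) :
    Iform a (x - y) z = Iform a x z - Iform a y z := by
  simp only [Iform_apply, Finsupp.sub_apply, ← Finset.sum_sub_distrib]
  refine Finset.sum_congr rfl fun u _ => Finset.sum_congr rfl fun v _ => by ring

lemma Iform_sub_right (x y z : Lt a) :
    Iform a x (y - z) = Iform a x y - Iform a x z := by
  simp only [Iform_apply, Finsupp.sub_apply, ← Finset.sum_sub_distrib]
  refine Finset.sum_congr rfl fun u _ => Finset.sum_congr rfl fun v _ => by ring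

lemma Iform_zero_left (z : Lt a) : Iform a 0 z = 0 := by
  simp [Iform_apply]

lemma Iform_comm (x y : Lt a) : Iform a x y = Iform a y x := by
  rw [Iform_apply, Iform_apply, Finset.sum_comm]
  refine Finset.sum_congr rfl fun u _ => Finset.sum_congr rfl fun v _ => by
    rw [cartan_symm]; ring

lemma Iform_gen_right (x : Lt a) (v : Vt a) :
    Iform a x (gen a v) = ∑ u : Vt a, x u * cartan a u v := by
  rw [Iform_apply]
  refine Finset.sum_congr rfl fun u _ => ?_
  rw [Finset.sum_eq_single v]
  · simp [gen, Finsupp.single_apply]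
  · intro w _ hw; simp [gen, Finsupp.single_apply, Ne.symm hw]
  · simp

lemma Iform_gen_gen (u v : Vt a) : Iform a (gen a u) (gen a v) = cartan a u v := by
  rw [Iform_gen_right, Finset.sum_eq_single u]
  · simp [gen, Finsupp.single_apply]
  · intro w _ hw; simp [gen, Finsupp.single_apply, Ne.symm hw]
  · simp

lemma Iform_delta_right (x : Lt a) : Iform a x (delta a) = 0 := by
  rw [delta, Iform_sub_right, Iform_gen_right, Iform_gen_right, sub_eq_zero]
  exact Finset.sum_congr rfl fun u _ => by rw [cartan_row_star_one]

lemma Iform_delta_left (x : Lt a) : Iform a (delta a) x = 0 := by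
  rw [Iform_comm, Iform_delta_right]

lemma Iform_gen_one_eq_star (x : Lt a) :
    Iform a (gen a Vt.one) x = Iform a (gen a Vt.star) x := by
  rw [Iform_comm, Iform_comm (gen a Vt.star)]
  rw [Iform_gen_right, Iform_gen_right]
  exact Finset.sum_congr rfl fun u _ => by rw [cartan_row_star_one]

end Aux2
section Aux3
variable {a : Fin 3 → ℕ}

/-- `reflect` at a basis vector, as a `ℤ`-linear map. -/
def rLin (a : Fin 3 → ℕ) (v : Vt a) : Lt a →ₗ[ℤ] Lt a where
  toFun := reflect a (gen a v)
  map_add' x y := by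
    simp only [reflect, Iform_add_right]
    module
  map_smul' c x := by
    simp only [reflect, Iform_smul_right, RingHom.id_apply]
    module

lemma rLin_apply (v : Vt a) (x : Lt a) :
    rLin a v x = x - Iform a (gen a v) x • gen a v := rfl

lemma reflect_reflect (v : Vt a) (x : Lt a) :
    reflect a (gen a v) (reflect a (gen a v) x) = x := by
  simp only [reflect, Iform_sub_right, Iform_smul_right, Iform_gen_gen, cartan_diag]
  module

/-- `reflect` at a basis vector, as a `ℤ`-linear equivalence. -/
def rEquiv (a : Fin 3 → ℕ) (v : Vt a) : Lt a ≃ₗ[ℤ] Lt a :=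
  LinearEquiv.ofLinear (rLin a v) (rLin a v)
    (LinearMap.ext fun x => reflect_reflect v x)
    (LinearMap.ext fun x => reflect_reflect v x)

lemma rEquiv_apply (v : Vt a) (x : Lt a) :
    rEquiv a v x = x - Iform a (gen a v) x • gen a v := rfl

lemma rEquiv_mem_weylGens (v : Vt a) : rEquiv a v ∈ weylGens a :=
  ⟨v, fun _ => rfl⟩

lemma rEquiv_mem_weyl (v : Vt a) : rEquiv a v ∈ weyl a :=
  Subgroup.subset_closure (rEquiv_mem_weylGens v)

lemma weylGens_eq (g : Lt a ≃ₗ[ℤ] Lt a) (hg : g ∈ weylGens a) :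
    ∃ v : Vt a, g = rEquiv a v := by
  obtain ⟨v, hv⟩ := hg
  exact ⟨v, LinearEquiv.toLinearMap_injective (LinearMap.ext fun x => hv x)⟩

end Aux3
section Aux4
variable {a : Fin 3 → ℕ} {χ : Lt a →ₗ[ℤ] Lt a →ₗ[ℤ] ℤ}

lemma chi_delta_delta (hχ : IsEulerForm a χ) : χ (delta a) (delta a) = 0 := by
  have h := hχ.1 (delta a) (delta a)
  rw [Iform_delta_left] at h
  omega

lemma chi_right_delta (hχ : IsEulerForm a χ) (x : Lt a) :
    χ x (delta a) = - χ (delta a) x := by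
  have h := hχ.1 x (delta a)
  rw [Iform_delta_right] at h
  omega

lemma chi_delta_coxeter (hχ : IsEulerForm a χ) (x : Lt a) :
    χ (delta a) (coxeter a x) = χ (delta a) x := by
  have h := hχ.2 x (delta a)
  rw [chi_right_delta hχ] at h
  omega

lemma twist_twistInv (hχ : IsEulerForm a χ) (x : Lt a) :
    twist a χ (twistInv a χ x) = x := by
  simp only [twist, twistInv, map_add, map_smul, chi_delta_delta hχ, smul_eq_mul,
    mul_zero, add_zero]
  module

lemma twistInv_twist (hχ : IsEulerForm a χ) (x : Lt a) :
    twistInv a χ (twist a χ x) = x := by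
  simp only [twist, twistInv, map_sub, map_smul, chi_delta_delta hχ, smul_eq_mul,
    mul_zero, sub_zero]
  module

/-- The twist `t_δ` as a `ℤ`-linear equivalence. -/
def tEquiv (χ : Lt a →ₗ[ℤ] Lt a →ₗ[ℤ] ℤ) (hχ : IsEulerForm a χ) : Lt a ≃ₗ[ℤ] Lt a where
  toFun := twist a χ
  invFun := twistInv a χ
  map_add' x y := by simp only [twist, map_add]; module
  map_smul' c x := by simp only [twist, map_smul, RingHom.id_apply, smul_eq_mul]; module
  left_inv x := twistInv_twist hχ x
  right_inv x := twist_twistInv hχ x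

lemma tEquiv_apply (hχ : IsEulerForm a χ) (x : Lt a) :
    tEquiv χ hχ x = x - χ (delta a) x • delta a := rfl

lemma tEquiv_symm_apply (hχ : IsEulerForm a χ) (x : Lt a) :
    (tEquiv χ hχ).symm x = x + χ (delta a) x • delta a := rfl

end Aux4
section Aux5
variable {a : Fin 3 → ℕ} {χ : Lt a →ₗ[ℤ] Lt a →ₗ[ℤ] ℤ}

/-- Composition of the reflections along a list of vertices. -/
def comp (a : Fin 3 → ℕ) (l : List (Vt a)) : Lt a → Lt a :=
  l.foldr (fun v g => reflect a (gen a v) ∘ g) id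

lemma comp_nil : comp a [] = id := rfl

lemma comp_cons (v : Vt a) (l : List (Vt a)) :
    comp a (v :: l) = reflect a (gen a v) ∘ comp a l := rfl

lemma foldr_comp (l : List (Vt a)) (h : Lt a → Lt a) :
    l.foldr (fun v g => reflect a (gen a v) ∘ g) h = comp a l ∘ h := by
  induction l with
  | nil => rfl
  | cons v t ih => simp [List.foldr_cons, ih, comp_cons, Function.comp_assoc]

lemma comp_append (l₁ l₂ : List (Vt a)) :
    comp a (l₁ ++ l₂) = comp a l₁ ∘ comp a l₂ := by
  unfold comp
  rw [List.foldr_append, foldr_comp]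
  rfl

lemma branchComp_eq (i : Fin 3) :
    branchComp a i = comp a ((List.finRange (a i - 1)).map (Vt.br i)) := by
  unfold branchComp comp
  rw [List.foldr_map]

/-- The list of all branch vertices, in the order used by `c̃_A`. -/
def LB (a : Fin 3 → ℕ) : List (Vt a) :=
  (List.finRange (a 0 - 1)).map (Vt.br 0) ++ (List.finRange (a 1 - 1)).map (Vt.br 1)
    ++ (List.finRange (a 2 - 1)).map (Vt.br 2)

lemma comp_LB :
    comp a (LB a) = branchComp a 0 ∘ branchComp a 1 ∘ branchComp a 2 := by
  rw [LB, comp_append, comp_append, branchComp_eq, branchComp_eq, branchComp_eq]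
  rfl

lemma br_ne {i i' : Fin 3} (h : i ≠ i') (j : Fin (a i - 1)) (j' : Fin (a i' - 1)) :
    Vt.br i j ≠ Vt.br i' j' := fun hh => by injection hh with h1 _; exact h h1

lemma LB_nodup : (LB a).Nodup := by
  have h (i : Fin 3) : ((List.finRange (a i - 1)).map (Vt.br i)).Nodup :=
    (List.nodup_finRange _).map (fun j j' h => by injection h)
  rw [LB]
  refine ((h 0).append (h 1) ?_).append (h 2) ?_
  · intro u hu0 hu1
    simp only [List.mem_map] at hu0 hu1
    obtain ⟨j, _, rfl⟩ := hu0
    obtain ⟨j', _, hj'⟩ := hu1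
    exact br_ne (by decide) j' j hj'
  · intro u hu0 hu2
    simp only [List.mem_append, List.mem_map] at hu0 hu2
    obtain ⟨j', _, hj'⟩ := hu2
    rcases hu0 with ⟨j, _, rfl⟩ | ⟨j, _, rfl⟩ <;>
      exact br_ne (by decide) j' j hj'

lemma LB_mem_br {u : Vt a} (hu : u ∈ LB a) : ∃ i j, u = Vt.br i j := by
  simp only [LB, List.mem_append, List.mem_map] at hu
  rcases hu with (⟨j, _, rfl⟩ | ⟨j, _, rfl⟩) | ⟨j, _, rfl⟩ <;> exact ⟨_, _, rfl⟩

/-- The twist functional is invariant under the branch part of the Coxeter element. -/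
lemma chi_delta_branch (hχ : IsEulerForm a χ) (x : Lt a) :
    χ (delta a) (comp a (LB a) x) = χ (delta a) x := by
  have hpair : ∀ y : Lt a,
      χ (delta a) (reflect a (gen a Vt.star) (reflect a (gen a Vt.one) y))
        = χ (delta a) y := by
    intro y
    have h1 : reflect a (gen a Vt.one) y = y - Iform a (gen a Vt.star) y • gen a Vt.one := by
      rw [reflect, Iform_gen_one_eq_star]
    have h2 : Iform a (gen a Vt.star) (reflect a (gen a Vt.one) y)
        = - Iform a (gen a Vt.star) y := by
      rw [h1, Iform_sub_right, Iform_smul_right, Iform_gen_gen]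
      simp [cartan]
      ring
    have h3 : reflect a (gen a Vt.star) (reflect a (gen a Vt.one) y)
        = y + Iform a (gen a Vt.star) y • delta a := by
      rw [reflect, h2, h1, delta]
      module
    rw [h3, map_add, map_smul, chi_delta_delta hχ, smul_eq_mul, mul_zero, add_zero]
  have hB : coxeter a x
      = reflect a (gen a Vt.star) (reflect a (gen a Vt.one) (comp a (LB a) x)) := by
    rw [coxeter, comp_LB]; rfl
  have h4 := chi_delta_coxeter hχ x
  rw [hB, hpair] at h4
  exact h4

/-- The discrepancy vector of the chain of reflections along a list. -/
def chainZ (a : Fin 3 → ℕ) : (Lt a →ₗ[ℤ] ℤ) → List (Vt a) → Lt a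
  | _, [] => 0
  | g, v :: t => g (gen a v) • gen a v + chainZ a (g ∘ₗ rLin a v) t

lemma chainZ_spec (l : List (Vt a)) (g : Lt a →ₗ[ℤ] ℤ) (x : Lt a) :
    g (comp a l x) = g x - Iform a (chainZ a g l) x := by
  induction l generalizing g with
  | nil => simp [comp_nil, chainZ, Iform_zero_left]
  | cons v t ih =>
    rw [comp_cons, Function.comp_apply, chainZ, Iform_add_left, Iform_smul_left]
    have : g (reflect a (gen a v) (comp a t x))
        = (g ∘ₗ rLin a v) (comp a t x) := rfl
    rw [this, ih (g ∘ₗ rLin a v)]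
    have h2 : (g ∘ₗ rLin a v) x = g x - Iform a (gen a v) x * g (gen a v) := by
      simp [rLin_apply, map_sub, map_smul, smul_eq_mul]
    rw [h2]
    ring

lemma chainZ_apply_notMem (l : List (Vt a)) (g : Lt a →ₗ[ℤ] ℤ) (u : Vt a)
    (hu : u ∉ l) : chainZ a g l u = 0 := by
  induction l generalizing g with
  | nil => rfl
  | cons v t ih =>
    simp only [chainZ, Finsupp.add_apply, Finsupp.smul_apply, smul_eq_mul]
    rw [ih _ (fun h => hu (List.mem_cons_of_mem v h))]
    have hvu : v ≠ u := fun h => hu (h ▸ (List.mem_cons_self : v ∈ v :: t))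
    simp [gen, Finsupp.single_apply, hvu]

lemma chainZ_zero_vals (l : List (Vt a)) (g : Lt a →ₗ[ℤ] ℤ)
    (hnd : l.Nodup) (hz : chainZ a g l = 0) : ∀ v ∈ l, g (gen a v) = 0 := by
  induction l generalizing g with
  | nil => intro v hv; cases hv
  | cons v t ih =>
    have hvt : v ∉ t := (List.nodup_cons.mp hnd).1
    have hcoef : g (gen a v) = 0 := by
      have := congrArg (fun z : Lt a => z v) hz
      simp only [chainZ, Finsupp.add_apply, Finsupp.smul_apply, smul_eq_mul,
        Finsupp.coe_zero, Pi.zero_apply] at this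
      rw [chainZ_apply_notMem t _ v hvt] at this
      simpa [gen, Finsupp.single_apply] using this
    have hcomp : g ∘ₗ rLin a v = g := by
      ext x
      simp [rLin_apply, map_sub, map_smul, smul_eq_mul, hcoef]
    have hz' : chainZ a (g ∘ₗ rLin a v) t = 0 := by
      have h0 := hz
      simp only [chainZ] at h0
      rw [hcoef] at h0
      simpa using h0
    intro u hu
    rcases List.mem_cons.mp hu with rfl | hu'
    · exact hcoef
    · have := ih (g ∘ₗ rLin a v) (List.nodup_cons.mp hnd).2 hz' u hu'
      rwa [hcomp] at this

end Aux5
section Aux6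
variable {a : Fin 3 → ℕ}

lemma sum_Vt (F : Vt a → ℤ) :
    ∑ u : Vt a, F u
      = F Vt.star + F Vt.one + ∑ i : Fin 3, ∑ j : Fin (a i - 1), F (Vt.br i j) := by
  rw [← Equiv.sum_comp (vtEquiv a).symm F]
  rw [Fintype.sum_sum_type, Fintype.sum_sum_type]
  rw [← Finset.univ_sigma_univ, Finset.sum_sigma]
  simp only [Finset.univ_unique, Finset.sum_singleton]
  rw [← add_assoc]
  rfl

lemma cartan_br_same (i : Fin 3) (j j' : Fin (a i - 1)) :
    cartan a (Vt.br i j') (Vt.br i j)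
      = (if (j' : ℕ) = (j : ℕ) + 1 then -1 else 0)
        + (if (j : ℕ) = (j' : ℕ) + 1 then -1 else 0)
        + (if j' = j then 2 else 0) := by
  simp only [cartan, true_and, Fin.ext_iff]
  split_ifs <;> omega

lemma cartan_br_other {i i' : Fin 3} (h : i' ≠ i) (j : Fin (a i - 1))
    (j' : Fin (a i' - 1)) : cartan a (Vt.br i' j') (Vt.br i j) = 0 := by
  simp only [cartan]
  rw [if_neg (by tauto), if_neg (by tauto)]

/-- The `k`-th coordinate of `z` along the `i`-th branch (as a function on `ℕ`). -/
def tval (a : Fin 3 → ℕ) (z : Lt a) (i : Fin 3) (k : ℕ) : ℤ :=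
  if h : k < a i - 1 then z (Vt.br i ⟨k, h⟩) else 0

lemma tval_pos {z : Lt a} {i : Fin 3} {k : ℕ} (h : k < a i - 1) :
    tval a z i k = z (Vt.br i ⟨k, h⟩) := dif_pos h

lemma tval_neg {z : Lt a} {i : Fin 3} {k : ℕ} (h : ¬ k < a i - 1) :
    tval a z i k = 0 := dif_neg h

lemma rec1 (z : Lt a) (hs : z Vt.star = 0) (ho : z Vt.one = 0)
    (hI : ∀ v : Vt a, Iform a z (gen a v) = 0) (i : Fin 3) (k : ℕ) (hk : k < a i - 1) :
    2 * tval a z i k = tval a z i (k + 1) + (if 0 < k then tval a z i (k - 1) else 0) := by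
  have h0 := hI (Vt.br i ⟨k, hk⟩)
  rw [Iform_gen_right, sum_Vt] at h0
  rw [hs, ho, zero_mul, zero_mul, zero_add, zero_add] at h0
  rw [Finset.sum_eq_single i (fun i' _ hi' => Finset.sum_eq_zero fun j' _ => by
    rw [cartan_br_other hi', mul_zero]) (by simp)] at h0
  have hsum : ∑ j' : Fin (a i - 1), z (Vt.br i j') * cartan a (Vt.br i j') (Vt.br i ⟨k, hk⟩)
      = (∑ j' : Fin (a i - 1), if j' = ⟨k, hk⟩ then 2 * z (Vt.br i j') else 0)
        - (∑ j' : Fin (a i - 1), if (j' : ℕ) = k + 1 then z (Vt.br i j') else 0)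
        - (∑ j' : Fin (a i - 1), if k = (j' : ℕ) + 1 then z (Vt.br i j') else 0) := by
    rw [← Finset.sum_sub_distrib, ← Finset.sum_sub_distrib]
    refine Finset.sum_congr rfl fun j' _ => ?_
    rw [cartan_br_same]
    simp only [Fin.val_mk, Fin.ext_iff]
    split_ifs <;> omega
  rw [hsum] at h0
  have e3 : (∑ j' : Fin (a i - 1), if j' = (⟨k, hk⟩ : Fin (a i - 1)) then 2 * z (Vt.br i j') else 0)
      = 2 * tval a z i k := by
    rw [Finset.sum_ite_eq' Finset.univ, tval_pos hk]
    simp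
  have e1 : (∑ j' : Fin (a i - 1), if (j' : ℕ) = k + 1 then z (Vt.br i j') else 0)
      = tval a z i (k + 1) := by
    by_cases h : k + 1 < a i - 1
    · have hcond : ∀ j' : Fin (a i - 1), ((j' : ℕ) = k + 1) = (j' = ⟨k + 1, h⟩) := by
        intro j'; rw [Fin.ext_iff]
      simp only [hcond]
      rw [Finset.sum_ite_eq' Finset.univ, tval_pos h]
      simp
    · rw [tval_neg h, Finset.sum_eq_zero]
      intro j' _
      rw [if_neg (by omega)]
  have e2 : (∑ j' : Fin (a i - 1), if k = (j' : ℕ) + 1 then z (Vt.br i j') else 0)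
      = (if 0 < k then tval a z i (k - 1) else 0) := by
    by_cases h : 0 < k
    · have hk1 : k - 1 < a i - 1 := by omega
      have hcond : ∀ j' : Fin (a i - 1), (k = (j' : ℕ) + 1) = (j' = ⟨k - 1, hk1⟩) := by
        intro j'; rw [Fin.ext_iff]; simp; omega
      simp only [hcond]
      rw [Finset.sum_ite_eq' Finset.univ, if_pos h, tval_pos hk1]
      simp
    · rw [if_neg h, Finset.sum_eq_zero]
      intro j' _
      rw [if_neg (by omega)]
  rw [e1, e2, e3] at h0
  omega

lemma rad_branch_zero (z : Lt a) (hs : z Vt.star = 0) (ho : z Vt.one = 0)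
    (hI : ∀ v : Vt a, Iform a z (gen a v) = 0) : z = 0 := by
  have key : ∀ (i : Fin 3) (k : ℕ), k < a i - 1 →
      tval a z i k = ((k : ℤ) + 1) * tval a z i 0 := by
    intro i k
    induction k using Nat.strong_induction_on with
    | _ k ih =>
      intro hk
      match k with
      | 0 => simp
      | 1 =>
        have h := rec1 z hs ho hI i 0 (by omega)
        rw [if_neg (by omega)] at h
        push_cast
        linarith
      | (m+2) =>
        have h := rec1 z hs ho hI i (m + 1) (by omega)
        rw [if_pos (by omega)] at h
        rw [ih (m + 1) (by omega) (by omega)] at h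
        simp only [Nat.add_sub_cancel] at h
        rw [ih m (by omega) (by omega)] at h
        push_cast at h ⊢
        linarith
  have t0 : ∀ i : Fin 3, 0 < a i - 1 → tval a z i 0 = 0 := by
    intro i hn
    have hlast := rec1 z hs ho hI i (a i - 1 - 1) (by omega)
    rw [show tval a z i (a i - 1 - 1 + 1) = 0 from tval_neg (by omega)] at hlast
    by_cases h1 : a i - 1 = 1
    · rw [show a i - 1 - 1 = 0 from by omega, if_neg (by omega)] at hlast
      omega
    · have h2 : 2 ≤ a i - 1 := by omega
      rw [if_pos (by omega)] at hlast
      rw [key i (a i - 1 - 1) (by omega), key i (a i - 1 - 1 - 1) (by omega)] at hlast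
      have hcast1 : ((a i - 1 - 1 : ℕ) : ℤ) = ((a i - 1 : ℕ) : ℤ) - 1 := by omega
      have hcast2 : ((a i - 1 - 1 - 1 : ℕ) : ℤ) = ((a i - 1 : ℕ) : ℤ) - 2 := by omega
      rw [hcast1, hcast2] at hlast
      have hfin : (((a i - 1 : ℕ) : ℤ) + 1) * tval a z i 0 = 0 := by linarith
      rcases mul_eq_zero.mp hfin with hc | hc
      · exfalso
        have h3 : (0 : ℤ) ≤ ((a i - 1 : ℕ) : ℤ) := Int.natCast_nonneg _
        omega
      · exact hc
  ext u
  cases u with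
  | star => exact hs
  | one => exact ho
  | br i j =>
    have hj : (j : ℕ) < a i - 1 := j.isLt
    have := key i (j : ℕ) hj
    rw [t0 i (by omega), mul_zero] at this
    rw [tval_pos hj] at this
    simpa using this
end Aux6
section Aux7
variable {a : Fin 3 → ℕ} {χ : Lt a →ₗ[ℤ] Lt a →ₗ[ℤ] ℤ}

lemma chi_delta_one_eq_star (hχ : IsEulerForm a χ) :
    χ (delta a) (gen a Vt.one) = χ (delta a) (gen a Vt.star) := by
  have h : χ (delta a) (gen a Vt.star) - χ (delta a) (gen a Vt.one) = 0 := by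
    rw [← map_sub]
    exact chi_delta_delta hχ
  omega

lemma chi_delta_br (hχ : IsEulerForm a χ) (i : Fin 3) (j : Fin (a i - 1)) :
    χ (delta a) (gen a (Vt.br i j)) = 0 := by
  set g : Lt a →ₗ[ℤ] ℤ := χ (delta a) with hg
  have hIz : ∀ x : Lt a, Iform a (chainZ a g (LB a)) x = 0 := by
    intro x
    have h1 := chainZ_spec (LB a) g x
    have h2 := chi_delta_branch hχ x
    rw [← hg] at h2
    rw [h2] at h1
    omega
  have hz : chainZ a g (LB a) = 0 := by
    refine rad_branch_zero _ ?_ ?_ fun v => hIz (gen a v)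
    · refine chainZ_apply_notMem _ _ _ fun h => ?_
      obtain ⟨i, j, hij⟩ := LB_mem_br h
      cases hij
    · refine chainZ_apply_notMem _ _ _ fun h => ?_
      obtain ⟨i, j, hij⟩ := LB_mem_br h
      cases hij
  have hmem : Vt.br i j ∈ LB a := by
    have hj : j ∈ List.finRange (a i - 1) := List.mem_finRange j
    fin_cases i <;> simp [LB]
  exact chainZ_zero_vals (LB a) g LB_nodup hz _ hmem

end Aux7
section Aux8
variable {a : Fin 3 → ℕ} {χ : Lt a →ₗ[ℤ] Lt a →ₗ[ℤ] ℤ}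

lemma star_delta : Iform a (gen a Vt.star) (delta a) = 0 := Iform_delta_right _

/-- The translation `τ = r_{𝟙*} r_𝟙`. -/
def tauEquiv (a : Fin 3 → ℕ) : Lt a ≃ₗ[ℤ] Lt a := rEquiv a Vt.star * rEquiv a Vt.one

lemma tau_apply (x : Lt a) :
    tauEquiv a x = x + Iform a (gen a Vt.star) x • delta a := by
  show rEquiv a Vt.star (rEquiv a Vt.one x) = _
  rw [rEquiv_apply, rEquiv_apply, Iform_gen_one_eq_star,
    Iform_sub_right, Iform_smul_right, Iform_gen_gen,
    show cartan a Vt.star Vt.one = 2 from rfl, delta]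
  module

lemma tau_inv_apply (x : Lt a) :
    (tauEquiv a)⁻¹ x = x - Iform a (gen a Vt.star) x • delta a := by
  show (tauEquiv a).symm x = _
  rw [LinearEquiv.symm_apply_eq, tau_apply, Iform_sub_right, Iform_smul_right,
    star_delta]
  module

lemma tau_zpow (m : ℤ) (x : Lt a) :
    ((tauEquiv a) ^ m) x = x + (m * Iform a (gen a Vt.star) x) • delta a := by
  induction m using Int.induction_on generalizing x with
  | zero => simp
  | succ n ih =>
    rw [zpow_add_one]
    show ((tauEquiv a) ^ (n : ℤ)) (tauEquiv a x) = _
    rw [ih, tau_apply, Iform_add_right, Iform_smul_right, star_delta]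
    push_cast
    module
  | pred n ih =>
    rw [show (-(n : ℤ) - 1) = (-(n : ℤ)) - 1 from rfl, zpow_sub_one]
    show ((tauEquiv a) ^ (-(n : ℤ))) ((tauEquiv a)⁻¹ x) = _
    rw [ih, tau_inv_apply, Iform_sub_right, Iform_smul_right, star_delta]
    push_cast
    module

lemma tEquiv_zpow (hχ : IsEulerForm a χ) (n : ℤ) (x : Lt a) :
    ((tEquiv χ hχ) ^ n) x = x - (n * χ (delta a) x) • delta a := by
  induction n using Int.induction_on generalizing x with
  | zero => simp
  | succ n ih =>
    rw [zpow_add_one]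
    show ((tEquiv χ hχ) ^ (n : ℤ)) (tEquiv χ hχ x) = _
    rw [ih, tEquiv_apply, map_sub, map_smul, chi_delta_delta hχ, smul_eq_mul, mul_zero,
      sub_zero]
    push_cast
    module
  | pred n ih =>
    rw [show (-(n : ℤ) - 1) = (-(n : ℤ)) - 1 from rfl, zpow_sub_one]
    show ((tEquiv χ hχ) ^ (-(n : ℤ))) ((tEquiv χ hχ)⁻¹ x) = _
    have hsymm : (tEquiv χ hχ)⁻¹ x = x + χ (delta a) x • delta a := rfl
    rw [ih, hsymm, map_add, map_smul, chi_delta_delta hχ, smul_eq_mul, mul_zero,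
      add_zero]
    push_cast
    module

lemma tau_mem_weyl : tauEquiv a ∈ weyl a :=
  mul_mem (rEquiv_mem_weyl Vt.star) (rEquiv_mem_weyl Vt.one)

lemma conj_star (hχ : IsEulerForm a χ) :
    tEquiv χ hχ * rEquiv a Vt.star * (tEquiv χ hχ)⁻¹
      = (tauEquiv a) ^ (-(χ (delta a) (gen a Vt.star))) * rEquiv a Vt.star := by
  refine LinearEquiv.ext fun x => ?_
  show tEquiv χ hχ (rEquiv a Vt.star ((tEquiv χ hχ).symm x))
    = ((tauEquiv a) ^ (-(χ (delta a) (gen a Vt.star)))) (rEquiv a Vt.star x)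
  rw [tEquiv_symm_apply hχ, rEquiv_apply, rEquiv_apply, tau_zpow,
    Iform_add_right, Iform_smul_right, star_delta, tEquiv_apply hχ,
    Iform_sub_right, Iform_smul_right, Iform_gen_gen,
    show cartan a Vt.star Vt.star = 2 from rfl,
    map_sub, map_add, map_smul, map_smul, chi_delta_delta hχ]
  simp only [smul_eq_mul]
  module

lemma conj_one (hχ : IsEulerForm a χ) :
    tEquiv χ hχ * rEquiv a Vt.one * (tEquiv χ hχ)⁻¹
      = (tauEquiv a) ^ (-(χ (delta a) (gen a Vt.star)) - 1) * rEquiv a Vt.star := by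
  refine LinearEquiv.ext fun x => ?_
  show tEquiv χ hχ (rEquiv a Vt.one ((tEquiv χ hχ).symm x))
    = ((tauEquiv a) ^ (-(χ (delta a) (gen a Vt.star)) - 1)) (rEquiv a Vt.star x)
  rw [tEquiv_symm_apply hχ, rEquiv_apply, rEquiv_apply, tau_zpow,
    Iform_gen_one_eq_star, Iform_add_right, Iform_smul_right, star_delta,
    tEquiv_apply hχ, Iform_sub_right, Iform_smul_right, Iform_gen_gen,
    show cartan a Vt.star Vt.star = 2 from rfl,
    map_sub, map_add, map_smul, map_smul, chi_delta_delta hχ,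
    chi_delta_one_eq_star hχ]
  simp only [smul_eq_mul]
  rw [delta]
  module

lemma conj_star' (hχ : IsEulerForm a χ) :
    (tEquiv χ hχ)⁻¹ * rEquiv a Vt.star * tEquiv χ hχ
      = (tauEquiv a) ^ (χ (delta a) (gen a Vt.star)) * rEquiv a Vt.star := by
  refine LinearEquiv.ext fun x => ?_
  show (tEquiv χ hχ).symm (rEquiv a Vt.star (tEquiv χ hχ x))
    = ((tauEquiv a) ^ (χ (delta a) (gen a Vt.star))) (rEquiv a Vt.star x)
  rw [tEquiv_apply hχ, rEquiv_apply, rEquiv_apply, tau_zpow,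
    Iform_sub_right, Iform_smul_right, star_delta, tEquiv_symm_apply hχ,
    Iform_sub_right, Iform_smul_right, Iform_gen_gen,
    show cartan a Vt.star Vt.star = 2 from rfl,
    map_sub, map_sub, map_smul, map_smul, chi_delta_delta hχ]
  simp only [smul_eq_mul]
  module

lemma conj_one' (hχ : IsEulerForm a χ) :
    (tEquiv χ hχ)⁻¹ * rEquiv a Vt.one * tEquiv χ hχ
      = (tauEquiv a) ^ (χ (delta a) (gen a Vt.star) - 1) * rEquiv a Vt.star := by
  refine LinearEquiv.ext fun x => ?_
  show (tEquiv χ hχ).symm (rEquiv a Vt.one (tEquiv χ hχ x))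
    = ((tauEquiv a) ^ (χ (delta a) (gen a Vt.star) - 1)) (rEquiv a Vt.star x)
  rw [tEquiv_apply hχ, rEquiv_apply, rEquiv_apply, tau_zpow,
    Iform_gen_one_eq_star, Iform_sub_right, Iform_smul_right, star_delta,
    tEquiv_symm_apply hχ, Iform_sub_right, Iform_smul_right, Iform_gen_gen,
    show cartan a Vt.star Vt.star = 2 from rfl,
    map_sub, map_sub, map_smul, map_smul, chi_delta_delta hχ,
    chi_delta_one_eq_star hχ]
  simp only [smul_eq_mul]
  rw [delta]
  module

lemma t_comm_br (hχ : IsEulerForm a χ) (i : Fin 3) (j : Fin (a i - 1)) :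
    tEquiv χ hχ * rEquiv a (Vt.br i j) = rEquiv a (Vt.br i j) * tEquiv χ hχ := by
  refine LinearEquiv.ext fun x => ?_
  show tEquiv χ hχ (rEquiv a (Vt.br i j) x) = rEquiv a (Vt.br i j) (tEquiv χ hχ x)
  rw [tEquiv_apply hχ, rEquiv_apply, rEquiv_apply, tEquiv_apply hχ,
    Iform_sub_right, Iform_smul_right, Iform_delta_right,
    map_sub, map_smul, chi_delta_br hχ]
  simp only [smul_eq_mul]
  module

lemma conj_mem (hχ : IsEulerForm a χ) (v : Vt a) :
    tEquiv χ hχ * rEquiv a v * (tEquiv χ hχ)⁻¹ ∈ weyl a := by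
  cases v with
  | star =>
    rw [conj_star hχ]
    exact mul_mem (Subgroup.zpow_mem _ tau_mem_weyl _) (rEquiv_mem_weyl _)
  | one =>
    rw [conj_one hχ]
    exact mul_mem (Subgroup.zpow_mem _ tau_mem_weyl _) (rEquiv_mem_weyl _)
  | br i j =>
    rw [t_comm_br hχ, mul_assoc, mul_inv_cancel, mul_one]
    exact rEquiv_mem_weyl _

lemma conj_mem' (hχ : IsEulerForm a χ) (v : Vt a) :
    (tEquiv χ hχ)⁻¹ * rEquiv a v * tEquiv χ hχ ∈ weyl a := by
  cases v with
  | star =>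
    rw [conj_star' hχ]
    exact mul_mem (Subgroup.zpow_mem _ tau_mem_weyl _) (rEquiv_mem_weyl _)
  | one =>
    rw [conj_one' hχ]
    exact mul_mem (Subgroup.zpow_mem _ tau_mem_weyl _) (rEquiv_mem_weyl _)
  | br i j =>
    rw [mul_assoc, ← t_comm_br hχ i j, ← mul_assoc, inv_mul_cancel, one_mul]
    exact rEquiv_mem_weyl _

end Aux8
section Aux9
variable {a : Fin 3 → ℕ} {χ : Lt a →ₗ[ℤ] Lt a →ₗ[ℤ] ℤ}

lemma conj_weyl (hχ : IsEulerForm a χ) :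
    ∀ w ∈ weyl a, tEquiv χ hχ * w * (tEquiv χ hχ)⁻¹ ∈ weyl a := by
  intro w hw
  refine Subgroup.closure_induction
    (p := fun g _ => tEquiv χ hχ * g * (tEquiv χ hχ)⁻¹ ∈ weyl a) ?_ ?_ ?_ ?_ hw
  · intro g hg
    obtain ⟨v, rfl⟩ := weylGens_eq g hg
    exact conj_mem hχ v
  · simpa using one_mem (weyl a)
  · intro x y _ _ hx hy
    have : tEquiv χ hχ * (x * y) * (tEquiv χ hχ)⁻¹
        = (tEquiv χ hχ * x * (tEquiv χ hχ)⁻¹) * (tEquiv χ hχ * y * (tEquiv χ hχ)⁻¹) := by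
      group
    rw [this]
    exact mul_mem hx hy
  · intro x _ hx
    have : tEquiv χ hχ * x⁻¹ * (tEquiv χ hχ)⁻¹
        = (tEquiv χ hχ * x * (tEquiv χ hχ)⁻¹)⁻¹ := by group
    rw [this]
    exact inv_mem hx

lemma conj_weyl' (hχ : IsEulerForm a χ) :
    ∀ w ∈ weyl a, (tEquiv χ hχ)⁻¹ * w * tEquiv χ hχ ∈ weyl a := by
  intro w hw
  refine Subgroup.closure_induction
    (p := fun g _ => (tEquiv χ hχ)⁻¹ * g * tEquiv χ hχ ∈ weyl a) ?_ ?_ ?_ ?_ hw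
  · intro g hg
    obtain ⟨v, rfl⟩ := weylGens_eq g hg
    exact conj_mem' hχ v
  · simpa using one_mem (weyl a)
  · intro x y _ _ hx hy
    have : (tEquiv χ hχ)⁻¹ * (x * y) * tEquiv χ hχ
        = ((tEquiv χ hχ)⁻¹ * x * tEquiv χ hχ) * ((tEquiv χ hχ)⁻¹ * y * tEquiv χ hχ) := by
      group
    rw [this]
    exact mul_mem hx hy
  · intro x _ hx
    have : (tEquiv χ hχ)⁻¹ * x⁻¹ * tEquiv χ hχ
        = ((tEquiv χ hχ)⁻¹ * x * tEquiv χ hχ)⁻¹ := by group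
    rw [this]
    exact inv_mem hx

lemma conj_zpow_weyl (hχ : IsEulerForm a χ) (n : ℤ) :
    ∀ w ∈ weyl a, (tEquiv χ hχ) ^ n * w * ((tEquiv χ hχ) ^ n)⁻¹ ∈ weyl a := by
  induction n using Int.induction_on with
  | zero => intro w hw; simpa using hw
  | succ n ih =>
    intro w hw
    have heq : (tEquiv χ hχ) ^ ((n : ℤ) + 1) * w * ((tEquiv χ hχ) ^ ((n : ℤ) + 1))⁻¹
        = (tEquiv χ hχ) ^ (n : ℤ)
            * (tEquiv χ hχ * w * (tEquiv χ hχ)⁻¹) * ((tEquiv χ hχ) ^ (n : ℤ))⁻¹ := by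
      rw [zpow_add_one]
      group
    rw [heq]
    exact ih _ (conj_weyl hχ w hw)
  | pred n ih =>
    intro w hw
    have heq : (tEquiv χ hχ) ^ (-(n : ℤ) - 1) * w * ((tEquiv χ hχ) ^ (-(n : ℤ) - 1))⁻¹
        = (tEquiv χ hχ) ^ (-(n : ℤ))
            * ((tEquiv χ hχ)⁻¹ * w * tEquiv χ hχ) * ((tEquiv χ hχ) ^ (-(n : ℤ)))⁻¹ := by
      rw [zpow_sub_one]
      group
    rw [heq]
    exact ih _ (conj_weyl' hχ w hw)

lemma t_mem_extWeyl (hχ : IsEulerForm a χ) : tEquiv χ hχ ∈ extWeyl a χ :=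
  Subgroup.subset_closure (Set.mem_union_right _ fun _ => rfl)

lemma weyl_le_extWeyl : weyl a ≤ extWeyl a χ :=
  Subgroup.closure_mono Set.subset_union_left

lemma extWeyl_decomp (hχ : IsEulerForm a χ) (g : Lt a ≃ₗ[ℤ] Lt a) (hg : g ∈ extWeyl a χ) :
    ∃ w ∈ weyl a, ∃ n : ℤ, g = w * (tEquiv χ hχ) ^ n := by
  let K : Subgroup (Lt a ≃ₗ[ℤ] Lt a) :=
    { carrier := {g | ∃ w ∈ weyl a, ∃ n : ℤ, g = w * (tEquiv χ hχ) ^ n}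
      one_mem' := ⟨1, one_mem _, 0, by simp⟩
      mul_mem' := by
        rintro g h ⟨w, hw, m, rfl⟩ ⟨w', hw', n, rfl⟩
        refine ⟨w * ((tEquiv χ hχ) ^ m * w' * ((tEquiv χ hχ) ^ m)⁻¹),
          mul_mem hw (conj_zpow_weyl hχ m w' hw'), m + n, ?_⟩
        rw [zpow_add]
        group
      inv_mem' := by
        rintro g ⟨w, hw, n, rfl⟩
        refine ⟨(tEquiv χ hχ) ^ (-n) * w⁻¹ * ((tEquiv χ hχ) ^ (-n))⁻¹,
          conj_zpow_weyl hχ (-n) w⁻¹ (inv_mem hw), -n, ?_⟩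
        group }
  have hle : extWeyl a χ ≤ K := by
    rw [extWeyl, Subgroup.closure_le]
    rintro g (hg | hg)
    · exact ⟨g, Subgroup.subset_closure hg, 0, by simp⟩
    · refine ⟨1, one_mem _, 1, ?_⟩
      rw [one_mul, zpow_one]
      exact LinearEquiv.ext fun x => hg x
  exact hle hg

end Aux9

/-- **The short exact sequence `1 → W̃_A → W̃_A^ext → T_A → 1`** (Corollary
3.7 of the paper): the affine Weyl group `W̃_A` is a normal subgroup of the
extended affine Weyl group `W̃_A^ext = ⟨W̃_A, t_δ⟩`, and the quotient
`W̃_A^ext / W̃_A` is cyclic, generated by the image of `t_δ`; equivalently,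
`W̃_A^ext = ⋃_{n ∈ ℤ} W̃_A · t_δⁿ`, i.e. `g ∈ W̃_A^ext` iff `g = w ∘ t_δⁿ`
for some `w ∈ W̃_A` and `n ∈ ℤ` (here `t_δⁿ(x) = x − n χ(δ,x) δ`). -/
theorem weyl_normal_in_extWeyl (a : Fin 3 → ℕ) (ha : ∀ i, 0 < a i)
    (hA : 1 < (a 0 : ℚ)⁻¹ + (a 1 : ℚ)⁻¹ + (a 2 : ℚ)⁻¹)
    (χ : Lt a →ₗ[ℤ] Lt a →ₗ[ℤ] ℤ) (hχ : IsEulerForm a χ) :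
    weyl a ≤ extWeyl a χ ∧
    (∀ g ∈ extWeyl a χ, ∀ w ∈ weyl a, g * w * g⁻¹ ∈ weyl a) ∧
    (∀ g : Lt a ≃ₗ[ℤ] Lt a, g ∈ extWeyl a χ ↔
      ∃ w ∈ weyl a, ∃ n : ℤ,
        ∀ x : Lt a, g x = w (x - (n * χ (delta a) x) • delta a)) := by
  refine ⟨weyl_le_extWeyl, ?_, ?_⟩
  · intro g hg w hw
    obtain ⟨w', hw', n, rfl⟩ := extWeyl_decomp hχ g hg
    have heq : w' * (tEquiv χ hχ) ^ n * w * (w' * (tEquiv χ hχ) ^ n)⁻¹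
        = w' * ((tEquiv χ hχ) ^ n * w * ((tEquiv χ hχ) ^ n)⁻¹) * w'⁻¹ := by group
    rw [heq]
    exact mul_mem (mul_mem hw' (conj_zpow_weyl hχ n w hw)) (inv_mem hw')
  · intro g
    constructor
    · intro hg
      obtain ⟨w, hw, n, rfl⟩ := extWeyl_decomp hχ g hg
      refine ⟨w, hw, n, fun x => ?_⟩
      rw [show (w * (tEquiv χ hχ) ^ n) x = w (((tEquiv χ hχ) ^ n) x) from rfl,
        tEquiv_zpow hχ]
    · rintro ⟨w, hw, n, h⟩
      have hgeq : g = w * (tEquiv χ hχ) ^ n := by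
        refine LinearEquiv.ext fun x => ?_
        rw [h x, show (w * (tEquiv χ hχ) ^ n) x = w (((tEquiv χ hχ) ^ n) x) from rfl,
          tEquiv_zpow hχ]
      rw [hgeq]
      exact mul_mem (weyl_le_extWeyl hw) (Subgroup.zpow_mem _ (t_mem_extWeyl hχ) n)


end
end AffineGRS
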